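/- arXiv:1706.09510 — 2 statements merged into one kernel-verified Lean document; each statement's English description precedes it below -/
import Mathlib

section
/- Let a ≥ 2 be fixed and let X_1,…,X_n be i.i.d. uniform on {1,…,a}. Then the expected total number of weakly increasing subsequences satisfies E[Y_n^{(a)}] ~ (1 / ((a−1)! · a^{a−1})) · n^{a−1} · (1 + 1/a)^{n−a+1} as n → ∞. -/
open Finset Filter

noncomputable section
attribute [local instance] Classical.propDecidable

/-- Probability weight of the word `x` when the letters are i.i.d. with distribution `p`. -/
def wordWt {n a : ℕ} (p : Fin a → ℝ) (x : Fin n → Fin a) : ℝ := ∏ i, p (x i)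

/-- Number of weakly increasing subsequences of length `k` of the word `x`. -/
def numWIS (n a k : ℕ) (x : Fin n → Fin a) : ℕ :=
  (univ.filter fun f : Fin k → Fin n => StrictMono f ∧ Monotone (x ∘ f)).card

/-- Expected number of weakly increasing subsequences of length `k`. -/
def expY (n a k : ℕ) (p : Fin a → ℝ) : ℝ :=
  ∑ x : Fin n → Fin a, wordWt p x * (numWIS n a k x : ℝ)
/-- Expected total number of weakly increasing subsequences (including the empty one). -/
def expYtot (n a : ℕ) (p : Fin a → ℝ) : ℝ :=
  ∑ x : Fin n → Fin a, wordWt p x * (∑ k ∈ Finset.range (n + 1), (numWIS n a k x : ℝ))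


lemma card_strictMono_subtype (k n : ℕ) :
    Fintype.card {f : Fin k → Fin n // StrictMono f} = n.choose k := by
  have e : {f : Fin k → Fin n // StrictMono f} ≃ {s : Finset (Fin n) // s.card = k} :=
    { toFun := fun f => ⟨Finset.univ.image f.1, by
        rw [Finset.card_image_of_injective _ f.2.injective, Finset.card_univ, Fintype.card_fin]⟩
      invFun := fun s => ⟨s.1.orderEmbOfFin s.2, (s.1.orderEmbOfFin s.2).strictMono⟩
      left_inv := fun f => by
        have hcard : (Finset.univ.image f.1).card = k := by
          rw [Finset.card_image_of_injective _ f.2.injective, Finset.card_univ,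
            Fintype.card_fin]
        ext i
        have := congrFun (Finset.orderEmbOfFin_unique hcard
          (fun x => Finset.mem_image_of_mem _ (Finset.mem_univ x)) f.2) i
        exact congrArg Fin.val this.symm
      right_inv := fun s => by
        ext i
        simp only
        constructor
        · intro hi
          rcases Finset.mem_image.1 hi with ⟨j, _, rfl⟩
          exact Finset.orderEmbOfFin_mem _ _ _
        · intro hi
          have := Finset.range_orderEmbOfFin s.1 s.2
          have : i ∈ Set.range (s.1.orderEmbOfFin s.2) := by rw [this]; exact hi
          rcases this with ⟨j, rfl⟩
          exact Finset.mem_image_of_mem _ (Finset.mem_univ j) }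
  rw [Fintype.card_congr e, Fintype.card_finset_len, Fintype.card_fin]

lemma strictMono_fin_add_le {k m : ℕ} {h : Fin k → Fin m} (hm : StrictMono h) :
    ∀ (d : ℕ) (i j : Fin k), (j : ℕ) = (i : ℕ) + d → (h i : ℕ) + d ≤ (h j : ℕ) := by
  intro d
  induction d with
  | zero => intro i j hij; have : i = j := Fin.ext (by omega); subst this; omega
  | succ d ih =>
    intro i j hij
    have hj' : (i : ℕ) + d < k := by have := j.2; omega
    have h1 := ih i ⟨(i : ℕ) + d, hj'⟩ rfl
    have h2 : h ⟨(i : ℕ) + d, hj'⟩ < h j := hm (by simp [Fin.lt_def]; omega)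
    rw [Fin.lt_def] at h2
    omega

lemma strictMono_fin_le_apply {k m : ℕ} {h : Fin k → Fin m} (hm : StrictMono h) (i : Fin k) :
    (i : ℕ) ≤ (h i : ℕ) := by
  have hk : 0 < k := i.pos
  have := strictMono_fin_add_le hm (i : ℕ) ⟨0, hk⟩ i (by simp)
  omega

lemma strictMono_fin_apply_le {k m : ℕ} {h : Fin k → Fin m} (hm : StrictMono h) (i : Fin k) :
    (h i : ℕ) + (k - 1 - (i : ℕ)) ≤ m - 1 := by
  have hk : 0 < k := i.pos
  have h1 := strictMono_fin_add_le hm (k - 1 - (i : ℕ)) i ⟨k - 1, by omega⟩ (by simp; omega)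
  have := (h ⟨k - 1, by omega⟩).2
  omega

lemma card_monotone_subtype (k a : ℕ) (ha : 1 ≤ a) :
    Fintype.card {g : Fin k → Fin a // Monotone g} = (a - 1 + k).choose k := by
  have e : {g : Fin k → Fin a // Monotone g} ≃ {h : Fin k → Fin (a - 1 + k) // StrictMono h} :=
    { toFun := fun g => ⟨fun i => ⟨(g.1 i : ℕ) + (i : ℕ), by
        have h1 := (g.1 i).2; have h2 := i.2; omega⟩, by
        intro i j hij
        have h1 := g.2 hij.le
        rw [Fin.le_def] at h1
        rw [Fin.lt_def] at hij ⊢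
        simp only
        omega⟩
      invFun := fun h => ⟨fun i => ⟨(h.1 i : ℕ) - (i : ℕ), by
        have h1 := strictMono_fin_apply_le h.2 i
        have h2 := i.2
        omega⟩, by
        intro i j hij
        rw [Fin.le_def] at hij ⊢
        simp only
        rcases eq_or_lt_of_le hij with heq | hlt
        · have : i = j := Fin.ext heq; subst this; omega
        · have h1 := strictMono_fin_add_le h.2 ((j:ℕ) - (i:ℕ)) i j (by omega)
          have h2 := strictMono_fin_le_apply h.2 i
          omega⟩
      left_inv := fun g => by ext i; simp
      right_inv := fun h => by
        ext i
        simp only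
        have := strictMono_fin_le_apply h.2 i
        omega }
  rw [Fintype.card_congr e, card_strictMono_subtype]


lemma card_mono_comp {n k a : ℕ} (ha : 1 ≤ a) {f : Fin k → Fin n} (hf : Function.Injective f)
    (hM : Fintype.card {g : Fin k → Fin a // Monotone g} = (a - 1 + k).choose k) :
    Fintype.card {x : Fin n → Fin a // Monotone (x ∘ f)}
      = (a - 1 + k).choose k * a ^ (n - k) := by
  classical
  have key : ∀ (g : Fin k → Fin a) (y : {i : Fin n // ¬ ∃ j, f j = i} → Fin a) (j : Fin k),
      (fun i : Fin n => if h : ∃ j, f j = i then g h.choose else y ⟨i, fun hr => h hr⟩) (f j)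
        = g j := by
    intro g y j
    have h : ∃ j', f j' = f j := ⟨j, rfl⟩
    simp only [dif_pos h]
    congr 1
    exact hf h.choose_spec
  have e : {x : Fin n → Fin a // Monotone (x ∘ f)}
      ≃ {g : Fin k → Fin a // Monotone g} × ({i : Fin n // ¬ ∃ j, f j = i} → Fin a) :=
    { toFun := fun x => (⟨x.1 ∘ f, x.2⟩, fun i => x.1 i.1)
      invFun := fun p => ⟨fun i => if h : ∃ j, f j = i then p.1.1 h.choose
          else p.2 ⟨i, fun hr => h hr⟩, by
        intro i j hij
        simp only [Function.comp_apply, key]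
        exact p.1.2 hij⟩
      left_inv := fun x => by
        ext i
        by_cases h : ∃ j, f j = i
        · simp only [dif_pos h]
          exact congrArg Fin.val (congrArg x.1 h.choose_spec)
        · simp only [dif_neg h]
      right_inv := fun p => by
        refine Prod.ext ?_ ?_
        · apply Subtype.ext
          funext j
          simp only [Function.comp_apply]
          exact key p.1.1 p.2 j
        · funext i
          simp only [dif_neg i.2] }
  rw [Fintype.card_congr e, Fintype.card_prod, hM, Fintype.card_fun]
  congr 2
  · exact Fintype.card_fin a
  · have h1 : Fintype.card {i : Fin n // ∃ j, f j = i} = k := by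
      have e2 : {i : Fin n // ∃ j, f j = i} ≃ Fin k :=
        (Equiv.subtypeEquivRight (fun i => by
          simp [Set.mem_range, eq_comm])).trans (Equiv.ofInjective f hf).symm
      rw [Fintype.card_congr e2, Fintype.card_fin]
    have h2 := Fintype.card_subtype_compl (fun i : Fin n => ∃ j, f j = i)
    rw [h2, h1, Fintype.card_fin]



lemma sum_numWIS (n a k : ℕ)
    (hSM : Fintype.card {f : Fin k → Fin n // StrictMono f} = n.choose k)
    (hmc : ∀ (f : Fin k → Fin n), Function.Injective f →
      Fintype.card {x : Fin n → Fin a // Monotone (x ∘ f)} = (a - 1 + k).choose k * a ^ (n - k)) :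
    ∑ x : Fin n → Fin a, numWIS n a k x
      = n.choose k * ((a - 1 + k).choose k * a ^ (n - k)) := by
  classical
  have step1 : ∀ x : Fin n → Fin a, numWIS n a k x
      = ∑ f : Fin k → Fin n, if StrictMono f ∧ Monotone (x ∘ f) then 1 else 0 := by
    intro x
    rw [numWIS, Finset.card_filter]
  rw [Finset.sum_congr rfl fun x _ => step1 x, Finset.sum_comm]
  have step2 : ∀ f : Fin k → Fin n,
      (∑ x : Fin n → Fin a, if StrictMono f ∧ Monotone (x ∘ f) then 1 else 0)
        = if StrictMono f then (a - 1 + k).choose k * a ^ (n - k) else 0 := by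
    intro f
    by_cases hf : StrictMono f
    · rw [if_pos hf]
      have : ∀ x : Fin n → Fin a,
          (if StrictMono f ∧ Monotone (x ∘ f) then (1:ℕ) else 0)
            = if Monotone (x ∘ f) then 1 else 0 := by
        intro x; by_cases h : Monotone (x ∘ f) <;> simp [h, hf]
      rw [Finset.sum_congr rfl fun x _ => this x, ← Finset.card_filter,
        ← Fintype.card_subtype, hmc f hf.injective]
    · rw [if_neg hf]
      refine Finset.sum_eq_zero fun x _ => ?_
      simp [hf]
  rw [Finset.sum_congr rfl fun f _ => step2 f, Finset.sum_ite, Finset.sum_const_zero,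
    add_zero, Finset.sum_const, smul_eq_mul]
  congr 1
  rw [← Fintype.card_subtype, hSM]



lemma expYtot_eq (n a : ℕ) (ha : 1 ≤ a)
    (hsum : ∀ k, ∑ x : Fin n → Fin a, numWIS n a k x
      = n.choose k * ((a - 1 + k).choose k * a ^ (n - k))) :
    expYtot n a (fun _ => (a:ℝ)⁻¹)
      = ∑ k ∈ Finset.range (n+1),
          (n.choose k : ℝ) * ((a - 1 + k).choose k : ℝ) * ((a:ℝ)⁻¹)^k := by
  have ha0 : (a:ℝ) ≠ 0 := Nat.cast_ne_zero.2 (by omega)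
  have hw : ∀ x : Fin n → Fin a, wordWt (fun _ => (a:ℝ)⁻¹) x = ((a:ℝ)⁻¹)^n := by
    intro x
    rw [wordWt, Finset.prod_const, Finset.card_univ, Fintype.card_fin]
  rw [expYtot]
  rw [Finset.sum_congr rfl fun x _ => by rw [hw x]]
  rw [← Finset.mul_sum, Finset.sum_comm]
  rw [Finset.mul_sum]
  refine Finset.sum_congr rfl fun k hk => ?_
  have hkn : k ≤ n := by simp [Finset.mem_range] at hk; omega
  rw [← Nat.cast_sum, hsum k]
  have key : ((a:ℝ)⁻¹)^n * (a:ℝ)^(n-k) = ((a:ℝ)⁻¹)^k := by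
    have h1 : (a:ℝ)^(n-k) * (a:ℝ)^k = (a:ℝ)^n := by rw [← pow_add]; congr 1; omega
    rw [inv_pow, inv_pow, ← h1, mul_inv, mul_comm ((a:ℝ)^(n-k))⁻¹, mul_assoc,
      inv_mul_cancel₀ (pow_ne_zero _ ha0), mul_one]
  push_cast
  calc ((a:ℝ)⁻¹)^n * ((n.choose k : ℝ) * (((a - 1 + k).choose k : ℝ) * (a:ℝ)^(n-k)))
      = (n.choose k : ℝ) * ((a - 1 + k).choose k : ℝ) * (((a:ℝ)⁻¹)^n * (a:ℝ)^(n-k)) := by ring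
    _ = _ := by rw [key]


lemma wis_inner_sum (n r : ℕ) (hrn : r ≤ n) (x : ℝ) :
    ∑ k ∈ Finset.range (n+1), (n.choose k : ℝ) * (k.choose r : ℝ) * x^k
      = (n.choose r : ℝ) * x^r * (1+x)^(n-r) := by
  have hz : ∀ k ∈ Finset.range r, (n.choose k : ℝ) * (k.choose r : ℝ) * x^k = 0 := by
    intro k hk
    rw [Finset.mem_range] at hk
    rw [Nat.choose_eq_zero_of_lt hk]
    simp
  rw [← Finset.sum_range_add_sum_Ico _ (by omega : r ≤ n+1),
    Finset.sum_eq_zero hz, zero_add, Finset.sum_Ico_eq_sum_range]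
  have hcm : ∀ j, j ≤ n - r → (n.choose (r+j) : ℝ) * ((r+j).choose r : ℝ)
      = (n.choose r : ℝ) * ((n-r).choose j : ℝ) := by
    intro j hj
    rw [← Nat.cast_mul, ← Nat.cast_mul]
    congr 1
    have := Nat.choose_mul (n := n) (show r ≤ r + j by omega)
    rw [mul_comm (n.choose (r+j))] at *
    rw [this]
    congr 2
    omega
  have hrw : n + 1 - r = (n - r) + 1 := by omega
  rw [hrw]
  have : ∀ j ∈ Finset.range (n - r + 1),
      (n.choose (r+j) : ℝ) * ((r+j).choose r : ℝ) * x^(r+j)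
        = (n.choose r : ℝ) * x^r * ((x^j * 1^(n-r-j)) * ((n-r).choose j : ℝ)) := by
    intro j hj
    rw [Finset.mem_range] at hj
    rw [hcm j (by omega), pow_add]
    ring
  rw [Finset.sum_congr rfl this, ← Finset.mul_sum, ← add_pow]
  ring

lemma wis_vandermonde (a : ℕ) (ha : 1 ≤ a) (k : ℕ) :
    ((a - 1 + k).choose k : ℕ) = ∑ r ∈ Finset.range a, k.choose r * (a-1).choose r := by
  have h1 : (a - 1 + k).choose k = (k + (a-1)).choose (a-1) := by
    rw [show a - 1 + k = k + (a-1) by omega, ← Nat.choose_symm (Nat.le_add_left (a-1) k)]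
    congr 1
    omega
  rw [h1, Nat.add_choose_eq, Finset.Nat.sum_antidiagonal_eq_sum_range_succ_mk,
    show (a-1).succ = a by omega]
  refine Finset.sum_congr rfl fun r hr => ?_
  rw [Finset.mem_range] at hr
  rw [Nat.choose_symm (by omega : r ≤ a - 1)]

lemma wis_key_sum (a : ℕ) (ha : 1 ≤ a) (n : ℕ) (hn : a ≤ n + 1) (x : ℝ) :
    ∑ k ∈ Finset.range (n+1), (n.choose k : ℝ) * ((a - 1 + k).choose k : ℝ) * x^k
      = ∑ r ∈ Finset.range a, ((a-1).choose r : ℝ) * ((n.choose r : ℝ) * x^r * (1+x)^(n-r)) := by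
  have step : ∀ k ∈ Finset.range (n+1),
      (n.choose k : ℝ) * ((a - 1 + k).choose k : ℝ) * x^k
        = ∑ r ∈ Finset.range a, ((a-1).choose r : ℝ)
            * ((n.choose k : ℝ) * (k.choose r : ℝ) * x^k) := by
    intro k _
    rw [wis_vandermonde a ha k]
    push_cast
    rw [Finset.mul_sum, Finset.sum_mul]
    refine Finset.sum_congr rfl fun r _ => ?_
    ring
  rw [Finset.sum_congr rfl step, Finset.sum_comm]
  refine Finset.sum_congr rfl fun r hr => ?_
  rw [Finset.mem_range] at hr
  rw [← Finset.mul_sum, wis_inner_sum n r (by omega) x]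


lemma wis_choose_div_pow (r : ℕ) :
    Tendsto (fun n : ℕ => (n.choose r : ℝ) / (n:ℝ)^r) atTop
      (nhds (1 / (r.factorial : ℝ))) := by
  have hG : Tendsto (fun n : ℕ => (1 / (r.factorial : ℝ))
      * ∏ i ∈ Finset.range r, (1 - (i:ℝ)/(n:ℝ))) atTop (nhds (1 / (r.factorial : ℝ))) := by
    have h1 : Tendsto (fun n : ℕ => ∏ i ∈ Finset.range r, (1 - (i:ℝ)/(n:ℝ))) atTop
        (nhds (∏ i ∈ Finset.range r, (1:ℝ))) := by
      refine tendsto_finset_prod _ fun i _ => ?_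
      have := (tendsto_const_div_atTop_nhds_zero_nat (i:ℝ)).const_sub 1
      simpa using this
    simpa using h1.const_mul (1 / (r.factorial : ℝ))
  refine hG.congr' ?_
  filter_upwards [eventually_ge_atTop (r+1)] with n hn
  have hn0 : (n:ℝ) ≠ 0 := Nat.cast_ne_zero.2 (by omega)
  have hprod : ∀ i ∈ Finset.range r, (1 - (i:ℝ)/(n:ℝ)) = ((n - i : ℕ):ℝ)/(n:ℝ) := by
    intro i hi
    rw [Finset.mem_range] at hi
    rw [Nat.cast_sub (by omega)]
    field_simp
  rw [Finset.prod_congr rfl hprod, Finset.prod_div_distrib, Finset.prod_const,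
    Finset.card_range, ← Nat.cast_prod, ← Nat.descFactorial_eq_prod_range,
    Nat.descFactorial_eq_factorial_mul_choose]
  push_cast
  field_simp

lemma wis_choose_div_pow' (r m : ℕ) (h : r < m) :
    Tendsto (fun n : ℕ => (n.choose r : ℝ) / (n:ℝ)^m) atTop (nhds 0) := by
  have h2 : Tendsto (fun n : ℕ => ((n:ℝ)^(m-r))⁻¹) atTop (nhds 0) := by
    refine Tendsto.inv_tendsto_atTop ?_
    exact (tendsto_pow_atTop (by omega : m - r ≠ 0)).comp tendsto_natCast_atTop_atTop
  have h3 := (wis_choose_div_pow r).mul h2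
  rw [mul_zero] at h3
  refine h3.congr' ?_
  filter_upwards [eventually_ge_atTop 1] with n hn
  have hn0 : (n:ℝ) ≠ 0 := Nat.cast_ne_zero.2 (by omega)
  have hpow : (n:ℝ)^r * (n:ℝ)^(m-r) = (n:ℝ)^m := by rw [← pow_add]; congr 1; omega
  show (n.choose r : ℝ) / (n:ℝ)^r * ((n:ℝ)^(m-r))⁻¹ = (n.choose r : ℝ) / (n:ℝ)^m
  rw [← hpow]
  field_simp

/-- asymptotics of the expected total number of weakly increasing
subsequences of a uniform random word, for fixed alphabet size a. -/
theorem stmt5 (a : ℕ) (ha : 2 ≤ a) :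
    Tendsto (fun n : ℕ =>
        expYtot n a (fun _ => (a : ℝ)⁻¹) /
          ((((a - 1).factorial : ℝ) * (a : ℝ) ^ (a - 1))⁻¹ * (n : ℝ) ^ (a - 1)
            * (1 + (a : ℝ)⁻¹) ^ (n + 1 - a)))
      atTop (nhds 1) := by
  have ha1 : 1 ≤ a := by omega
  have ha0 : (0:ℝ) < a := by exact_mod_cast (by omega : 0 < a)
  set x : ℝ := (a:ℝ)⁻¹ with hxdef
  set c : ℝ := ((a - 1).factorial : ℝ) * (a : ℝ) ^ (a - 1) with hcdef
  have hcne : c ≠ 0 := by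
    rw [hcdef]
    positivity
  have hx0 : 0 < x := by rw [hxdef]; positivity
  have h1x : (0:ℝ) < 1 + x := by linarith
  have h1xne : (1:ℝ) + x ≠ 0 := ne_of_gt h1x
  -- the limit of each term
  have hterm : ∀ r ∈ Finset.range a,
      Tendsto (fun n : ℕ => ((a-1).choose r : ℝ) * x^r * (1+x)^(a-1-r) * c
          * ((n.choose r : ℝ)/(n:ℝ)^(a-1))) atTop
        (nhds (if r = a - 1 then (1:ℝ) else 0)) := by
    intro r hr
    rw [Finset.mem_range] at hr
    by_cases h : r = a - 1
    · subst h
      rw [if_pos rfl]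
      have h2 := (wis_choose_div_pow (a-1)).const_mul
        (((a-1).choose (a-1) : ℝ) * x^(a-1) * (1+x)^(a-1-(a-1)) * c)
      have hval : ((a-1).choose (a-1) : ℝ) * x^(a-1) * (1+x)^(a-1-(a-1)) * c
          * (1 / ((a-1).factorial : ℝ)) = 1 := by
        have hxa : x^(a-1) * (a:ℝ)^(a-1) = 1 := by
          rw [hxdef, ← mul_pow, inv_mul_cancel₀ (ne_of_gt ha0), one_pow]
        have hfne : ((a-1).factorial : ℝ) ≠ 0 := by positivity
        rw [Nat.choose_self, Nat.sub_self, pow_zero, hcdef]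
        push_cast
        field_simp
        rw [hxdef] at hxa
        linear_combination hxa
      rw [hval] at h2
      exact h2.congr fun n => by ring
    · have hr' : r < a - 1 := by omega
      rw [if_neg h]
      have h2 := (wis_choose_div_pow' r (a-1) hr').const_mul
        (((a-1).choose r : ℝ) * x^r * (1+x)^(a-1-r) * c)
      rw [mul_zero] at h2
      exact h2.congr fun n => by ring
  have hG : Tendsto (fun n : ℕ => ∑ r ∈ Finset.range a,
      ((a-1).choose r : ℝ) * x^r * (1+x)^(a-1-r) * c
        * ((n.choose r : ℝ)/(n:ℝ)^(a-1))) atTop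
      (nhds (∑ r ∈ Finset.range a, if r = a - 1 then (1:ℝ) else 0)) :=
    tendsto_finset_sum _ hterm
  have hsum1 : (∑ r ∈ Finset.range a, if r = a - 1 then (1:ℝ) else 0) = 1 := by
    rw [Finset.sum_ite_eq' (Finset.range a) (a-1) (fun _ => (1:ℝ)),
      if_pos (Finset.mem_range.2 (by omega))]
  rw [hsum1] at hG
  refine hG.congr' ?_
  filter_upwards [eventually_ge_atTop a] with n hn
  have hn0 : (0:ℝ) < n := by exact_mod_cast (by omega : 0 < n)
  have hnne : (n:ℝ) ≠ 0 := ne_of_gt hn0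
  have h1 : expYtot n a (fun _ => x)
      = ∑ r ∈ Finset.range a, ((a-1).choose r : ℝ)
          * ((n.choose r : ℝ) * x^r * (1+x)^(n-r)) := by
    rw [expYtot_eq n a ha1 (fun k => sum_numWIS n a k (card_strictMono_subtype k n)
      (fun f hf => card_mono_comp ha1 hf (card_monotone_subtype k a ha1)))]
    exact wis_key_sum a ha1 n (by omega) x
  rw [h1, Finset.sum_div]
  refine Finset.sum_congr rfl fun r hr => ?_
  rw [Finset.mem_range] at hr
  have hsplit : (1+x)^(n-r) = (1+x)^(n+1-a) * (1+x)^(a-1-r) := by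
    rw [← pow_add]
    congr 1
    omega
  rw [hsplit]
  field_simp
end
end

section
/- Let a ≥ 2 and let X_1,…,X_n be i.i.d. uniform on {1,…,a}. Then the second moment of the total number of weakly increasing subsequences satisfies the upper bound E[(Y_n^{(a)})^2] ≤ Σ_{0 ≤ k_1 + k_2 ≤ n} 2^{k_1} · C(a+k_1−1, a−1) · C(a+k_2−1, a−1) · C(n, k_1) · C(n−k_1, k_2) · a^{−(k_1+k_2)}, where the sum is over pairs of nonnegative integers (k_1, k_2) with k_1 + k_2 ≤ n. -/
open Finset Filter

noncomputable section
attribute [local instance] Classical.propDecidable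

/-- Second moment of the total number of weakly increasing subsequences. -/
def expY2tot (n a : ℕ) (p : Fin a → ℝ) : ℝ :=
  ∑ x : Fin n → Fin a,
    wordWt p x * (∑ k ∈ Finset.range (n + 1), (numWIS n a k x : ℝ)) ^ 2

/-- `good S x` : `x` is weakly increasing along `S`. -/
def good {n a : ℕ} (S : Finset (Fin n)) (x : Fin n → Fin a) : Prop :=
  ∀ i ∈ S, ∀ j ∈ S, i ≤ j → x i ≤ x j

lemma good_mono {n a : ℕ} {S T : Finset (Fin n)} {x : Fin n → Fin a} (h : S ⊆ T)
    (hT : good T x) : good S x :=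
  fun i hi j hj hij => hT i (h hi) j (h hj) hij

lemma strictMono_eq_of_range_eq {α : Type*} [LinearOrder α] {k : ℕ} {f g : Fin k → α}
    (hf : StrictMono f) (hg : StrictMono g)
    (h : Set.range f = Set.range g) : f = g := by
  haveI : WellFoundedLT (Fin k) := inferInstance
  exact (StrictMono.range_inj hf hg).1 h

lemma image_orderEmbOfFin {α : Type*} [LinearOrder α] (S : Finset α) {k : ℕ} (h : S.card = k) :
    Finset.image (S.orderEmbOfFin h) univ = S := by
  rw [← Finset.coe_inj, Finset.coe_image, Finset.coe_univ, Set.image_univ,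
    Finset.range_orderEmbOfFin]

lemma numWIS_eq (n a k : ℕ) (x : Fin n → Fin a) :
    numWIS n a k x = ((Finset.powersetCard k (univ : Finset (Fin n))).filter
      fun S => good S x).card := by
  unfold numWIS
  refine Finset.card_bij' (fun f _ => Finset.image f univ)
    (fun S hS => ⇑(S.orderEmbOfFin (Finset.mem_powersetCard.1 (Finset.mem_filter.1 hS).1).2))
    ?_ ?_ ?_ ?_
  · intro f hf
    obtain ⟨hsm, hmono⟩ := (Finset.mem_filter.1 hf).2
    refine Finset.mem_filter.2 ⟨Finset.mem_powersetCard.2 ⟨Finset.subset_univ _, ?_⟩, ?_⟩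
    · rw [Finset.card_image_of_injective _ hsm.injective, card_univ, Fintype.card_fin]
    · intro i hi j hj hij
      obtain ⟨p, -, rfl⟩ := Finset.mem_image.1 hi
      obtain ⟨q, -, rfl⟩ := Finset.mem_image.1 hj
      rcases le_total p q with hpq | hqp
      · exact hmono hpq
      · have : f p = f q := le_antisymm hij (hsm.monotone hqp)
        rw [this]
  · intro S hS
    refine Finset.mem_filter.2 ⟨Finset.mem_univ _, (S.orderEmbOfFin _).strictMono, ?_⟩
    intro p q hpq
    exact (Finset.mem_filter.1 hS).2 _ (Finset.orderEmbOfFin_mem S _ p)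
      _ (Finset.orderEmbOfFin_mem S _ q) ((S.orderEmbOfFin _).monotone hpq)
  · intro f hf
    exact (Finset.orderEmbOfFin_unique _
      (fun p => Finset.mem_image_of_mem f (mem_univ p)) (Finset.mem_filter.1 hf).2.1).symm
  · intro S hS
    have := image_orderEmbOfFin S (Finset.mem_powersetCard.1 (Finset.mem_filter.1 hS).1).2
    convert this using 2

def Gcard {n a : ℕ} (x : Fin n → Fin a) : ℕ :=
  ((univ : Finset (Fin n)).powerset.filter fun S => good S x).card

lemma sum_numWIS_s6 (n a : ℕ) (x : Fin n → Fin a) :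
    ∑ k ∈ Finset.range (n + 1), numWIS n a k x = Gcard x := by
  unfold Gcard
  rw [Finset.card_eq_sum_card_fiberwise
    (f := Finset.card) (t := Finset.range (n + 1)) ?_]
  · refine Finset.sum_congr rfl fun k _ => ?_
    rw [numWIS_eq]
    congr 1
    ext S
    simp only [Finset.mem_filter, Finset.mem_powersetCard, Finset.mem_powerset]
    tauto
  · intro S hS
    rw [Finset.mem_coe, Finset.mem_range]
    have := Finset.card_le_card (Finset.mem_powerset.1 (Finset.mem_filter.1 hS).1)
    rw [card_univ, Fintype.card_fin] at this
    omega

def Mcard (a k : ℕ) : ℕ :=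
  ((univ : Finset (Fin k → Fin a)).filter fun f => Monotone f).card

lemma Mcard_le {a : ℕ} (ha : 1 ≤ a) (k : ℕ) : Mcard a k ≤ (a + k - 1).choose (a - 1) := by
  have hchoose : (a + k - 1).choose (a - 1) = (a + k - 1).choose k := by
    have h1 : a - 1 = (a + k - 1) - k := by omega
    rw [h1, Nat.choose_symm (by omega)]
  rw [hchoose]
  have hcard : ((Finset.powersetCard k (univ : Finset (Fin (a + k - 1)))).card)
      = (a + k - 1).choose k := by
    rw [Finset.card_powersetCard, card_univ, Fintype.card_fin]
  rw [← hcard]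
  unfold Mcard
  set G : (Fin k → Fin a) → (Fin k → Fin (a + k - 1)) := fun f j =>
    ⟨(f j : ℕ) + (j : ℕ), by have := (f j).isLt; have := j.isLt; omega⟩ with hG
  have hGsm : ∀ f : Fin k → Fin a, Monotone f → StrictMono (G f) := by
    intro f hf p q hpq
    have h1 : (f p : ℕ) ≤ (f q : ℕ) := hf hpq.le
    have h2 : (p : ℕ) < (q : ℕ) := hpq
    simp only [hG, Fin.mk_lt_mk]
    omega
  refine Finset.card_le_card_of_injOn (fun f => Finset.image (G f) univ) ?_ ?_
  · intro f hf
    have hsm := hGsm f (Finset.mem_filter.1 hf).2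
    refine Finset.mem_powersetCard.2 ⟨Finset.subset_univ _, ?_⟩
    rw [Finset.card_image_of_injective _ hsm.injective, card_univ, Fintype.card_fin]
  · intro f hf g hg hfg
    simp only [Finset.coe_filter, Set.mem_setOf_eq] at hf hg
    have hfg' : Set.range (G f) = Set.range (G g) := by
      rw [← Set.image_univ, ← Finset.coe_univ, ← Finset.coe_image (f := G f),
        ← Set.image_univ (f := G g), ← Finset.coe_univ, ← Finset.coe_image (f := G g)]
      exact congrArg _ hfg
    have := strictMono_eq_of_range_eq (hGsm f hf.2) (hGsm g hg.2) hfg'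
    funext j
    have hj := congrFun this j
    simp only [hG, Fin.mk.injEq] at hj
    exact Fin.ext (by omega)

lemma countGood {n a : ℕ} (A B : Finset (Fin n)) (hd : Disjoint A B) :
    ((univ : Finset (Fin n → Fin a)).filter fun x => good A x ∧ good B x).card
      ≤ Mcard a A.card * Mcard a B.card * a ^ (n - A.card - B.card) := by
  classical
  set C : Finset (Fin n) := (A ∪ B)ᶜ with hC
  have hCcard : C.card = n - A.card - B.card := by
    rw [hC, Finset.card_compl, Fintype.card_fin, Finset.card_union_of_disjoint hd]
    omega
  have htarget : (((univ.filter fun f : Fin A.card → Fin a => Monotone f) ×ˢ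
      (univ.filter fun f : Fin B.card → Fin a => Monotone f)) ×ˢ
      (univ : Finset (Fin C.card → Fin a))).card
      = Mcard a A.card * Mcard a B.card * a ^ (n - A.card - B.card) := by
    rw [Finset.card_product, Finset.card_product, card_univ, Fintype.card_fun,
      Fintype.card_fin, Fintype.card_fin, hCcard]
    rfl
  rw [← htarget]
  refine Finset.card_le_card_of_injOn (fun x =>
    ((x ∘ A.orderEmbOfFin rfl, x ∘ B.orderEmbOfFin rfl), x ∘ C.orderEmbOfFin rfl)) ?_ ?_
  · intro x hx
    obtain ⟨hA, hB⟩ := (Finset.mem_filter.1 hx).2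
    refine Finset.mem_product.2 ⟨Finset.mem_product.2 ⟨?_, ?_⟩, Finset.mem_univ _⟩
    · refine Finset.mem_filter.2 ⟨Finset.mem_univ _, fun p q hpq => ?_⟩
      exact hA _ (Finset.orderEmbOfFin_mem A rfl p) _ (Finset.orderEmbOfFin_mem A rfl q)
        ((A.orderEmbOfFin rfl).monotone hpq)
    · refine Finset.mem_filter.2 ⟨Finset.mem_univ _, fun p q hpq => ?_⟩
      exact hB _ (Finset.orderEmbOfFin_mem B rfl p) _ (Finset.orderEmbOfFin_mem B rfl q)
        ((B.orderEmbOfFin rfl).monotone hpq)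
  · intro x _ y _ hxy
    simp only [Prod.mk.injEq] at hxy
    obtain ⟨⟨h1, h2⟩, h3⟩ := hxy
    funext i
    have key : ∀ (S : Finset (Fin n)), i ∈ S →
        (x ∘ S.orderEmbOfFin rfl) = (y ∘ S.orderEmbOfFin rfl) → x i = y i := by
      intro S hiS hS
      have hrange := Finset.range_orderEmbOfFin S (rfl : S.card = S.card)
      have : i ∈ Set.range (S.orderEmbOfFin rfl) := by rw [hrange]; exact hiS
      obtain ⟨j, hj⟩ := this
      have := congrFun hS j
      simpa [hj] using this
    by_cases hiA : i ∈ A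
    · exact key A hiA h1
    by_cases hiB : i ∈ B
    · exact key B hiB h2
    · refine key C ?_ h3
      rw [hC, Finset.mem_compl, Finset.mem_union]
      tauto

lemma fiber_card {n : ℕ} (S B : Finset (Fin n)) (hB : B ⊆ Sᶜ) :
    (((univ : Finset (Fin n)).powerset).filter fun T => T \ S = B).card = 2 ^ S.card := by
  classical
  have hB' : ∀ i ∈ B, i ∉ S := fun i hi => Finset.mem_compl.1 (hB hi)
  rw [← Finset.card_powerset S]
  refine Finset.card_bij' (fun T _ => T ∩ S) (fun I _ => B ∪ I) ?_ ?_ ?_ ?_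
  · intro T _
    exact Finset.mem_powerset.2 Finset.inter_subset_right
  · intro I hI
    have hI' : I ⊆ S := Finset.mem_powerset.1 hI
    refine Finset.mem_filter.2 ⟨Finset.mem_powerset.2 (Finset.subset_univ _), ?_⟩
    ext i
    simp only [Finset.mem_sdiff, Finset.mem_union]
    constructor
    · rintro ⟨hi | hi, hiS⟩
      · exact hi
      · exact absurd (hI' hi) hiS
    · intro hi
      exact ⟨Or.inl hi, hB' i hi⟩
  · intro T hT
    have h := (Finset.mem_filter.1 hT).2
    show B ∪ T ∩ S = T
    rw [← h]
    ext i
    simp only [Finset.mem_union, Finset.mem_sdiff, Finset.mem_inter]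
    tauto
  · intro I hI
    have hI' : I ⊆ S := Finset.mem_powerset.1 hI
    ext i
    simp only [Finset.mem_inter, Finset.mem_union]
    constructor
    · rintro ⟨hi | hi, hiS⟩
      · exact absurd hiS (hB' i hi)
      · exact hi
    · intro hi
      exact ⟨Or.inr hi, hI' hi⟩

lemma sum_pow {α : Type*} [Fintype α] [DecidableEq α] (s : Finset α) (h : ℕ → ℕ) :
    ∑ T ∈ s.powerset, h T.card = ∑ k ∈ Finset.range (s.card + 1), s.card.choose k * h k := by
  classical
  rw [← Finset.sum_fiberwise_of_maps_to' (g := Finset.card) (t := Finset.range (s.card + 1))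
    (fun T hT => Finset.mem_range.2 (Nat.lt_succ_of_le
      (Finset.card_le_card (Finset.mem_powerset.1 hT)))) h]
  refine Finset.sum_congr rfl fun k _ => ?_
  rw [Finset.sum_const, smul_eq_mul]
  congr 1
  rw [← Finset.card_powersetCard, Finset.powersetCard_eq_filter]

lemma key_nat {n a : ℕ} (ha : 1 ≤ a) :
    ∑ x : Fin n → Fin a, (Gcard x) ^ 2
      ≤ ∑ k1 ∈ Finset.range (n + 1), n.choose k1 *
          ∑ k2 ∈ Finset.range (n - k1 + 1), (n - k1).choose k2 *
            (2 ^ k1 * ((a + k1 - 1).choose (a - 1) * (a + k2 - 1).choose (a - 1)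
              * a ^ (n - k1 - k2))) := by
  classical
  set F : ℕ → ℕ → ℕ := fun k1 k2 => (a + k1 - 1).choose (a - 1) * (a + k2 - 1).choose (a - 1)
    * a ^ (n - k1 - k2) with hF
  set H : ℕ → ℕ := fun k1 => ∑ k2 ∈ Finset.range (n - k1 + 1),
    (n - k1).choose k2 * (2 ^ k1 * F k1 k2) with hH
  have step1 : ∑ x : Fin n → Fin a, (Gcard x) ^ 2
      = ∑ S ∈ (univ : Finset (Fin n)).powerset, ∑ T ∈ (univ : Finset (Fin n)).powerset,
          ((univ : Finset (Fin n → Fin a)).filter fun x => good S x ∧ good T x).card := by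
    have hsq : ∀ x : Fin n → Fin a, (Gcard x) ^ 2
        = ∑ S ∈ (univ : Finset (Fin n)).powerset, ∑ T ∈ (univ : Finset (Fin n)).powerset,
            (if good S x ∧ good T x then 1 else 0) := by
      intro x
      rw [sq]
      unfold Gcard
      rw [Finset.card_filter, Finset.sum_mul_sum]
      exact Finset.sum_congr rfl fun S _ => Finset.sum_congr rfl fun T _ => by
        by_cases h1 : good S x <;> by_cases h2 : good T x <;> simp [h1, h2]
    rw [Finset.sum_congr rfl fun x _ => hsq x, Finset.sum_comm]
    refine Finset.sum_congr rfl fun S _ => ?_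
    rw [Finset.sum_comm]
    exact Finset.sum_congr rfl fun T _ => (Finset.card_filter _ _).symm
  have step2 : ∀ S T : Finset (Fin n),
      ((univ : Finset (Fin n → Fin a)).filter fun x => good S x ∧ good T x).card
        ≤ F S.card ((T \ S).card) := by
    intro S T
    have hsub : ((univ : Finset (Fin n → Fin a)).filter fun x => good S x ∧ good T x)
        ⊆ (univ.filter fun x => good S x ∧ good (T \ S) x) := by
      intro x hx
      have h := (Finset.mem_filter.1 hx).2
      exact Finset.mem_filter.2 ⟨Finset.mem_univ _,
        h.1, good_mono Finset.sdiff_subset h.2⟩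
    refine (Finset.card_le_card hsub).trans
      ((countGood S (T \ S) disjoint_sdiff_self_right).trans ?_)
    exact Nat.mul_le_mul_right _ (Nat.mul_le_mul (Mcard_le ha _) (Mcard_le ha _))
  calc ∑ x : Fin n → Fin a, (Gcard x) ^ 2
      = ∑ S ∈ (univ : Finset (Fin n)).powerset, ∑ T ∈ (univ : Finset (Fin n)).powerset,
          ((univ : Finset (Fin n → Fin a)).filter fun x => good S x ∧ good T x).card := step1
    _ ≤ ∑ S ∈ (univ : Finset (Fin n)).powerset, ∑ T ∈ (univ : Finset (Fin n)).powerset,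
          F S.card ((T \ S).card) :=
        Finset.sum_le_sum fun S _ => Finset.sum_le_sum fun T _ => step2 S T
    _ = ∑ S ∈ (univ : Finset (Fin n)).powerset, ∑ B ∈ Sᶜ.powerset,
          2 ^ S.card * F S.card B.card := by
        refine Finset.sum_congr rfl fun S _ => ?_
        rw [← Finset.sum_fiberwise_of_maps_to' (g := fun T => T \ S) (t := Sᶜ.powerset)
          (fun T _ => Finset.mem_powerset.2 fun i hi =>
            Finset.mem_compl.2 (Finset.mem_sdiff.1 hi).2) (fun B => F S.card B.card)]
        refine Finset.sum_congr rfl fun B hB => ?_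
        rw [Finset.sum_const, smul_eq_mul, fiber_card S B (Finset.mem_powerset.1 hB)]
    _ = ∑ S ∈ (univ : Finset (Fin n)).powerset, H S.card := by
        refine Finset.sum_congr rfl fun S _ => ?_
        have hcompl : Sᶜ.card = n - S.card := by
          rw [Finset.card_compl, Fintype.card_fin]
        rw [sum_pow Sᶜ (fun k2 => 2 ^ S.card * F S.card k2), hcompl, hH]
    _ = ∑ k1 ∈ Finset.range (n + 1), n.choose k1 * H k1 := by
        have hu : (univ : Finset (Fin n)).card = n := by rw [card_univ, Fintype.card_fin]
        rw [sum_pow univ H, hu]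

/-- upper bound for the second moment of the total number of weakly
increasing subsequences of a uniform random word. -/
theorem stmt6 (a : ℕ) (ha : 2 ≤ a) (n : ℕ) :
    expY2tot n a (fun _ => (a : ℝ)⁻¹)
      ≤ ∑ k1 ∈ Finset.range (n + 1), ∑ k2 ∈ Finset.range (n + 1 - k1),
          2 ^ k1 * ((a + k1 - 1).choose (a - 1) : ℝ) * ((a + k2 - 1).choose (a - 1) : ℝ)
            * (n.choose k1 : ℝ) * ((n - k1).choose k2 : ℝ) * ((a : ℝ) ^ (k1 + k2))⁻¹ := by
  have ha0 : (a : ℝ) ≠ 0 := Nat.cast_ne_zero.2 (by omega)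
  have ha1 : 1 ≤ a := by omega
  have hLHS : expY2tot n a (fun _ => (a : ℝ)⁻¹)
      = ((a : ℝ)⁻¹) ^ n * ((∑ x : Fin n → Fin a, (Gcard x) ^ 2 : ℕ) : ℝ) := by
    unfold expY2tot
    rw [Nat.cast_sum, Finset.mul_sum]
    refine Finset.sum_congr rfl fun x _ => ?_
    have hw : wordWt (fun _ => (a : ℝ)⁻¹) x = ((a : ℝ)⁻¹) ^ n := by
      unfold wordWt
      rw [Finset.prod_const, card_univ, Fintype.card_fin]
    have hsum : (∑ k ∈ Finset.range (n + 1), (numWIS n a k x : ℝ)) = (Gcard x : ℝ) := by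
      rw [← Nat.cast_sum, sum_numWIS_s6]
    rw [hw, hsum]
    push_cast
    ring
  rw [hLHS]
  have hineq := key_nat (n := n) ha1
  have h2 : ((a : ℝ)⁻¹) ^ n * ((∑ x : Fin n → Fin a, (Gcard x) ^ 2 : ℕ) : ℝ)
      ≤ ((a : ℝ)⁻¹) ^ n * ((∑ k1 ∈ Finset.range (n + 1), n.choose k1 *
          ∑ k2 ∈ Finset.range (n - k1 + 1), (n - k1).choose k2 *
            (2 ^ k1 * ((a + k1 - 1).choose (a - 1) * (a + k2 - 1).choose (a - 1)
              * a ^ (n - k1 - k2))) : ℕ) : ℝ) := by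
    refine mul_le_mul_of_nonneg_left ?_ (by positivity)
    exact_mod_cast hineq
  refine h2.trans (le_of_eq ?_)
  push_cast
  rw [Finset.mul_sum]
  refine Finset.sum_congr rfl fun k1 hk1 => ?_
  have hk1' : k1 ≤ n := by
    have := Finset.mem_range.1 hk1; omega
  have hr : n + 1 - k1 = n - k1 + 1 := by omega
  rw [hr, Finset.mul_sum, Finset.mul_sum]
  refine Finset.sum_congr rfl fun k2 hk2 => ?_
  have hk2' : k2 ≤ n - k1 := by
    have := Finset.mem_range.1 hk2; omega
  have hpow : ((a : ℝ)⁻¹) ^ n * (a : ℝ) ^ (n - k1 - k2) = ((a : ℝ) ^ (k1 + k2))⁻¹ := by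
    have hsplit : (a : ℝ) ^ (k1 + k2) * (a : ℝ) ^ (n - k1 - k2) = (a : ℝ) ^ n := by
      rw [← pow_add]
      congr 1
      omega
    rw [inv_pow, ← hsplit, mul_inv, mul_assoc,
      inv_mul_cancel₀ (pow_ne_zero _ ha0), mul_one]
  rw [← hpow]
  ring
end
end
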